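/- Let V be a multi vector space over a finite-dimensional vector space X. If B is an M-basis for V and B* is any basis of X, then ∑_{x ∈ B*} C_V(x) ≤ ∑_{x ∈ B} C_V(x). -/

import Mathlib

/-- sums of counts over any basis are dominated by the sum over an M-basis. -/
theorem mvs_Mbasis_sum_max
    {K X ι ι' : Type*} [Field K] [AddCommGroup X] [Module K X] [FiniteDimensional K X]
    [Fintype ι] [Fintype ι']
    (C : X → ℕ)
    (hadd : ∀ x y : X, min (C x) (C y) ≤ C (x + y))
    (hsmul : ∀ (a : K) (x : X), C x ≤ C (a • x))
    (b : Module.Basis ι K X)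
    (hM : ∀ (s : Finset ι) (hs : s.Nonempty) (a : ι → K), (∀ i ∈ s, a i ≠ 0) →
      C (∑ i ∈ s, a i • b i) = s.inf' hs (fun i => C (b i)))
    (b' : Module.Basis ι' K X) :
    ∑ j, C (b' j) ≤ ∑ i, C (b i) := by
  classical
  -- Hall's condition
  have hall : ∀ s : Finset ι', s.card ≤ (s.biUnion fun j => (b.repr (b' j)).support).card := by
    intro s
    set U := s.biUnion fun j => (b.repr (b' j)).support with hU
    set W : Submodule K X := Submodule.span K (b '' (U : Set ι)) with hW
    have hspan : ∀ j ∈ s, b' j ∈ W := by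
      intro j hj
      refine Submodule.span_mono ?_ (b.mem_span_repr_support (b' j))
      rintro x ⟨i, hi, rfl⟩
      exact ⟨i, Finset.mem_biUnion.mpr ⟨j, hj, hi⟩, rfl⟩
    have hli : LinearIndependent K (fun j : s => b' (j : ι')) :=
      b'.linearIndependent.comp _ Subtype.val_injective
    have hli2 : LinearIndependent K (fun j : s => (⟨b' (j : ι'), hspan j j.2⟩ : W)) := by
      apply LinearIndependent.of_comp W.subtype
      exact hli
    have h1 : Fintype.card s ≤ Module.finrank K W :=
      hli2.fintype_card_le_finrank
    have h2 : Module.finrank K W ≤ U.card := by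
      have : b '' (U : Set ι) = ((U.image b : Finset X) : Set X) := by
        simp [Finset.coe_image]
      calc Module.finrank K W ≤ (U.image b).card := by
            rw [hW, this]; exact finrank_span_finset_le_card (U.image b)
        _ ≤ U.card := Finset.card_image_le
    simpa using h1.trans h2
  obtain ⟨f, hf, hfm⟩ := (Finset.all_card_le_biUnion_card_iff_exists_injective
    (fun j => (b.repr (b' j)).support)).mp hall
  -- key pointwise bound
  have key : ∀ j, C (b' j) ≤ C (b (f j)) := by
    intro j
    have hne : ((b.repr (b' j)).support).Nonempty := by
      rw [Finsupp.support_nonempty_iff]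
      simp [Finsupp.ext_iff]
      intro h
      exact b'.ne_zero j (b.repr.injective (by simpa using h))
    have hrepr : b' j = ∑ i ∈ (b.repr (b' j)).support, (b.repr (b' j)) i • b i := by
      conv_lhs => rw [← b.sum_repr (b' j)]
      exact (Finset.sum_subset (Finset.subset_univ _)
        (fun i _ hi => by simp [Finsupp.notMem_support_iff.mp hi])).symm
    have := hM (b.repr (b' j)).support hne (fun i => (b.repr (b' j)) i)
      (fun i hi => Finsupp.mem_support_iff.mp hi)
    rw [hrepr, this]
    exact Finset.inf'_le _ (hfm j)
  calc ∑ j, C (b' j) ≤ ∑ j, C (b (f j)) := Finset.sum_le_sum fun j _ => key j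
    _ = ∑ i ∈ Finset.univ.image f, C (b i) := by
        rw [Finset.sum_image (fun x _ y _ h => hf h)]
    _ ≤ ∑ i, C (b i) := Finset.sum_le_sum_of_subset (Finset.subset_univ _)
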